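/- Let F(x,y) = (y, -x + s(y)). Every (x,y) ∈ ℝ² is a periodic point of F whose minimal period p is determined as follows, where k = ⌊x⌋, ℓ = ⌊y⌋ and V_{a,b} = max(|a+b+1| − 1, |a−b|) for a,b ∈ ℤ: (a) if x ∉ ℤ, y ∉ ℤ and (x−k, y−ℓ) ≠ (1/2, 1/2), then p = 8V_{k,ℓ} + 4; if x−k = 1/2 and y−ℓ = 1/2, then p = 2V_{k,ℓ}+1 when V_{k,ℓ} is even and p = 4V_{k,ℓ}+2 when V_{k,ℓ} is odd; (b) if x ∈ ℤ and y ∉ ℤ, then p = 8V_{k,ℓ}+4 when k is even and p = 8V_{k−1,ℓ}+4 when k is odd; (c) if x ∉ ℤ and y ∈ ℤ, then p = 8V_{k,ℓ}+4 when ℓ is even and p = 8V_{k,ℓ−1}+4 when ℓ is odd; (d) if x ∈ ℤ and y ∈ ℤ, then p = 8V_{k',ℓ'}+4, where k' = k if k is even and k' = k−1 if k is odd, and ℓ' = ℓ if ℓ is even and ℓ' = ℓ−1 if ℓ is odd. -/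

import Mathlib

noncomputable def s (y : ℝ) : ℝ := if 0 ≤ y then 1 else -1

noncomputable def F (q : ℝ × ℝ) : ℝ × ℝ := (q.2, -q.1 + s q.2)

def Vc (a b : ℤ) : ℤ := max (|a + b + 1| - 1) |a - b|


def ringAux (V J : ℤ) : ℤ × ℤ :=
  (if J ≤ 2*V then 2*V+1-2*J else 2*J-6*V-3,
   if J ≤ V then 2*J+1 else if J ≤ 3*V+1 then 4*V+1-2*J else 2*J-8*V-3)

def ringp (V j : ℤ) : ℤ × ℤ := ringAux V (j % (4*V+2))

lemma ring_g (V : ℤ) (hV : 0 ≤ V) (j : ℤ) :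
    ringp V (j + (3*V+2)) =
      ((ringp V j).2, -(ringp V j).1 + (if 0 ≤ (ringp V j).2 then 2 else -2)) := by
  have hN : (0:ℤ) < 4*V+2 := by omega
  have h0 : 0 ≤ j % (4*V+2) := Int.emod_nonneg j (by omega : (4*V+2:ℤ) ≠ 0)
  have h1 : j % (4*V+2) < 4*V+2 := Int.emod_lt_of_pos j hN
  have key : (j + (3*V+2)) % (4*V+2) = (j % (4*V+2) + (3*V+2)) % (4*V+2) :=
    (Int.emod_add_emod j (4*V+2) (3*V+2)).symm
  set J := j % (4*V+2) with hJ
  by_cases hc : J + (3*V+2) < 4*V+2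
  · have key2 : (j + (3*V+2)) % (4*V+2) = J + (3*V+2) := by
      rw [key]; apply Int.emod_eq_of_lt <;> omega
    simp only [ringp, key2, ← hJ, ringAux, Prod.mk.injEq]
    split_ifs <;> omega
  · have key2 : (j + (3*V+2)) % (4*V+2) = J + (3*V+2) - (4*V+2) := by
      rw [key]
      have h4 : J + (3*V+2) = (J + (3*V+2) - (4*V+2)) + (4*V+2) * 1 := by ring
      conv_lhs => rw [h4, Int.add_mul_emod_self_left]
      apply Int.emod_eq_of_lt <;> omega
    simp only [ringp, key2, ← hJ, ringAux, Prod.mk.injEq]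
    split_ifs <;> omega

lemma ring_fst_mod (V : ℤ) (hV : 0 ≤ V) (j : ℤ) :
    (4:ℤ) ∣ ((ringp V j).1 - (2*(V+j)+1)) := by
  have hN : (0:ℤ) < 4*V+2 := by omega
  have h0 : 0 ≤ j % (4*V+2) := Int.emod_nonneg j (by omega : (4*V+2:ℤ) ≠ 0)
  have h1 : j % (4*V+2) < 4*V+2 := Int.emod_lt_of_pos j hN
  have h2 : j % (4*V+2) % 2 = j % 2 := Int.emod_emod_of_dvd j ⟨2*V+1, by ring⟩
  simp only [ringp, ringAux]
  split_ifs <;> omega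

lemma ring_snd_mod (V : ℤ) (hV : 0 ≤ V) (j : ℤ) :
    (4:ℤ) ∣ ((ringp V j).2 - (2*j+1)) := by
  have hN : (0:ℤ) < 4*V+2 := by omega
  have h0 : 0 ≤ j % (4*V+2) := Int.emod_nonneg j (by omega : (4*V+2:ℤ) ≠ 0)
  have h1 : j % (4*V+2) < 4*V+2 := Int.emod_lt_of_pos j hN
  have h2 : j % (4*V+2) % 2 = j % 2 := Int.emod_emod_of_dvd j ⟨2*V+1, by ring⟩
  simp only [ringp, ringAux]
  split_ifs <;> omega

lemma ring_inj (V : ℤ) (hV : 0 ≤ V) {j j' : ℤ} (h : ringp V j = ringp V j') :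
    j % (4*V+2) = j' % (4*V+2) := by
  have hN : (0:ℤ) < 4*V+2 := by omega
  have h0 : 0 ≤ j % (4*V+2) := Int.emod_nonneg j (by omega : (4*V+2:ℤ) ≠ 0)
  have h1 : j % (4*V+2) < 4*V+2 := Int.emod_lt_of_pos j hN
  have h0' : 0 ≤ j' % (4*V+2) := Int.emod_nonneg j' (by omega : (4*V+2:ℤ) ≠ 0)
  have h1' : j' % (4*V+2) < 4*V+2 := Int.emod_lt_of_pos j' hN
  simp only [ringp, ringAux, Prod.mk.injEq] at h
  split_ifs at h <;> omega

lemma ringp_add_mul (V j t : ℤ) : ringp V (j + (4*V+2)*t) = ringp V j := by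
  simp only [ringp]
  congr 1
  rw [Int.add_mul_emod_self_left]

lemma shift_par (a m c : ℤ) : (a + m*c) % 2 = (a + (m % 2)*c) % 2 := by
  conv_lhs => rw [Int.add_emod, Int.mul_emod]
  conv_rhs => rw [Int.add_emod, Int.mul_emod, Int.emod_emod_of_dvd m dvd_rfl]

lemma vc_spec (k ℓ : ℤ) : (k-ℓ ≤ Vc k ℓ) ∧ (ℓ-k ≤ Vc k ℓ) ∧ (k+ℓ ≤ Vc k ℓ) ∧
    (-(k+ℓ)-2 ≤ Vc k ℓ) ∧
    (Vc k ℓ = k+ℓ ∨ Vc k ℓ = -(k+ℓ)-2 ∨ Vc k ℓ = k-ℓ ∨ Vc k ℓ = ℓ-k) := by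
  unfold Vc
  rcases abs_cases (k+ℓ+1) with ⟨ha, ha'⟩ | ⟨ha, ha'⟩ <;>
    rcases abs_cases (k-ℓ) with ⟨hb, hb'⟩ | ⟨hb, hb'⟩ <;>
    rw [ha, hb] <;>
    rcases max_cases (k+ℓ+1-1) (k-ℓ) with ⟨hm, hm'⟩ | ⟨hm, hm'⟩ <;>
    rcases max_cases (k+ℓ+1-1) (-(k-ℓ)) with ⟨hm2, hm2'⟩ | ⟨hm2, hm2'⟩ <;>
    rcases max_cases (-(k+ℓ+1)-1) (k-ℓ) with ⟨hm3, hm3'⟩ | ⟨hm3, hm3'⟩ <;>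
    rcases max_cases (-(k+ℓ+1)-1) (-(k-ℓ)) with ⟨hm4, hm4'⟩ | ⟨hm4, hm4'⟩ <;>
    omega

lemma vc_nonneg (k ℓ : ℤ) : 0 ≤ Vc k ℓ := by
  have := vc_spec k ℓ; omega

lemma base_spec (k ℓ : ℤ) :
    0 ≤ (if 0 ≤ ℓ then Vc k ℓ - k else 3*Vc k ℓ+2+k) ∧
    (if 0 ≤ ℓ then Vc k ℓ - k else 3*Vc k ℓ+2+k) < 4*Vc k ℓ+2 ∧
    ringp (Vc k ℓ) (if 0 ≤ ℓ then Vc k ℓ - k else 3*Vc k ℓ + 2 + k) = (2*k+1, 2*ℓ+1) ∧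
    (if 0 ≤ ℓ then Vc k ℓ - k else 3*Vc k ℓ+2+k) % 2 = ℓ % 2 ∧
    (Vc k ℓ + (if 0 ≤ ℓ then Vc k ℓ - k else 3*Vc k ℓ+2+k)) % 2 = k % 2 := by
  obtain ⟨h1, h2, h3, h4, h5⟩ := vc_spec k ℓ
  set V := Vc k ℓ with hV
  by_cases hl : 0 ≤ ℓ <;> simp only [hl, if_true, if_false] <;>
  [ (have hj0 : 0 ≤ V - k := by omega
     have hjN : V - k < 4*V+2 := by omega
     refine ⟨hj0, hjN, ?_, by omega, by omega⟩
     rw [ringp, Int.emod_eq_of_lt hj0 hjN]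
     simp only [ringAux, Prod.mk.injEq]
     split_ifs <;> omega);
    (have hj0 : 0 ≤ 3*V+2+k := by omega
     have hjN : 3*V+2+k < 4*V+2 := by omega
     refine ⟨hj0, hjN, ?_, by omega, by omega⟩
     rw [ringp, Int.emod_eq_of_lt hj0 hjN]
     simp only [ringAux, Prod.mk.injEq]
     split_ifs <;> omega) ]

lemma dvd_key (V n : ℤ) (hN : (4*V+2) ∣ n*(3*V+2)) : (2*V+1) ∣ n := by
  have h1 : (2*V+1) ∣ n*(3*V+2) := dvd_trans ⟨2, by ring⟩ hN
  have h2 : n = 2*(n*(3*V+2)) - (2*V+1)*(3*n) := by ring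
  rw [h2]
  exact dvd_sub (Dvd.dvd.mul_left h1 2) (Dvd.intro _ rfl)

lemma div_lemma (V n : ℤ) (hV : 0 ≤ V) (hn : 0 < n) (h4 : (4:ℤ) ∣ n)
    (hN : (4*V+2) ∣ n*(3*V+2)) : 8*V+4 ≤ n := by
  obtain ⟨b, hb⟩ := dvd_key V n hN
  have hbpos : 0 < b := by nlinarith
  have h4b : (4:ℤ) ∣ b := by
    have hb2 : b = (2*V+1)*n - (4*V*V+4*V)*b := by linear_combination (-(2*V+1)) * hb
    rw [hb2]
    exact dvd_sub (Dvd.dvd.mul_left h4 _) ⟨(V*V+V)*b, by ring⟩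
  have hb4 : 4 ≤ b := Int.le_of_dvd hbpos h4b
  nlinarith

lemma cdiv_even (V n : ℤ) (hV : 0 ≤ V) (hn : 0 < n)
    (hN : (4*V+2) ∣ n*(3*V+2)) : 2*V+1 ≤ n := by
  have := dvd_key V n hN
  exact Int.le_of_dvd hn this

lemma cdiv_odd (V n : ℤ) (hV : 0 ≤ V) (hVo : ¬ Even V) (hn : 0 < n)
    (hN : (4*V+2) ∣ n*(3*V+2)) : 4*V+2 ≤ n := by
  obtain ⟨b, hb⟩ := dvd_key V n hN
  have hbpos : 0 < b := by nlinarith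
  have h2n : (2:ℤ) ∣ n := by
    obtain ⟨c, hc⟩ := hN
    have hV2 : V % 2 = 1 := by rw [Int.even_iff] at hVo; omega
    have : n = (4*V+2)*c - n*(3*V+1) := by linear_combination hc
    obtain ⟨u, hu⟩ : (2:ℤ) ∣ (3*V+1) := by omega
    rw [this, hu]
    exact dvd_sub ⟨(2*V+1)*c, by ring⟩ ⟨n*u, by ring⟩
  have h2b : (2:ℤ) ∣ b := by
    have hb2 : b = (2*V+1)*n - (4*V*V+4*V)*b := by linear_combination (-(2*V+1)) * hb
    rw [hb2]
    exact dvd_sub (Dvd.dvd.mul_left h2n _) ⟨(2*V*V+2*V)*b, by ring⟩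
  have hb2 : 2 ≤ b := Int.le_of_dvd hbpos h2b
  nlinarith

lemma even_valid (V : ℤ) (hVe : Even V) : (4*V+2) ∣ (2*V+1)*(3*V+2) := by
  obtain ⟨u, hu⟩ := hVe
  exact ⟨3*u+1, by rw [hu]; ring⟩

noncomputable def drot (d₁ d₂ : ℝ) (n : ℕ) : ℝ × ℝ :=
  if n % 4 = 0 then (d₁, d₂) else if n % 4 = 1 then (d₂, -d₁)
  else if n % 4 = 2 then (-d₁, -d₂) else (-d₂, d₁)

lemma drot_succ (d₁ d₂ : ℝ) (n : ℕ) :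
    drot d₁ d₂ (n+1) = ((drot d₁ d₂ n).2, -(drot d₁ d₂ n).1) := by
  have h : n % 4 = 0 ∨ n % 4 = 1 ∨ n % 4 = 2 ∨ n % 4 = 3 := by omega
  rcases h with h|h|h|h
  · have h' : (n+1) % 4 = 1 := by omega
    simp [drot, h, h']
  · have h' : (n+1) % 4 = 2 := by omega
    simp [drot, h, h']
  · have h' : (n+1) % 4 = 3 := by omega
    simp [drot, h, h']
  · have h' : (n+1) % 4 = 0 := by omega
    simp [drot, h, h']

lemma drot_bound (d₁ d₂ : ℝ) (hb₁ : |d₁| ≤ 1) (hb₂ : |d₂| ≤ 1) (n : ℕ) :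
    |(drot d₁ d₂ n).1| ≤ 1 ∧ |(drot d₁ d₂ n).2| ≤ 1 := by
  unfold drot
  split_ifs <;> simp [abs_neg] <;> constructor <;> assumption

lemma half_int_zero {e : ℤ} {d : ℝ} (h : (e:ℝ) = 2*d) (hb : |d| ≤ 1)
    (h4 : (4:ℤ) ∣ e) : d = 0 := by
  obtain ⟨t, rfl⟩ := h4
  have ht : d = 2*(t:ℝ) := by push_cast at h; linarith
  rcases eq_or_ne t 0 with rfl | h0
  · simp at ht; exact ht
  · exfalso
    have h1 : (1:ℤ) ≤ |t| := Int.one_le_abs h0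
    have h1' : (1:ℝ) ≤ |(t:ℝ)| := by exact_mod_cast h1
    rw [ht, abs_mul] at hb
    simp only [abs_two] at hb
    nlinarith

lemma master (k' ℓ' : ℤ) (d₁ d₂ x y : ℝ)
    (hx : 2*x = 2*(k':ℝ)+1 + d₁) (hy : 2*y = 2*(ℓ':ℝ)+1 + d₂)
    (hb₁ : |d₁| ≤ 1) (hb₂ : |d₂| ≤ 1)
    (h₁ : |d₁| = 1 → Even k') (h₂ : |d₂| = 1 → Even ℓ') :
    (¬(d₁ = 0 ∧ d₂ = 0) →
      Function.minimalPeriod F (x, y) = (8 * Vc k' ℓ' + 4).toNat) ∧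
    ((d₁ = 0 ∧ d₂ = 0) → Function.minimalPeriod F (x, y) =
      (if Even (Vc k' ℓ') then 2 * Vc k' ℓ' + 1 else 4 * Vc k' ℓ' + 2).toNat) := by
  obtain ⟨hj0, hjN, hbase, hpj, hpVj⟩ := base_spec k' ℓ'
  have hV : 0 ≤ Vc k' ℓ' := vc_nonneg k' ℓ'
  set V := Vc k' ℓ' with hVdef
  set j₀ := (if 0 ≤ ℓ' then V - k' else 3*V+2+k') with hj₀def
  have hbase1 : (ringp V j₀).1 = 2*k'+1 := by rw [hbase]
  have hbase2 : (ringp V j₀).2 = 2*ℓ'+1 := by rw [hbase]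
  -- avoidance of the bad tie
  have havoid : ∀ n : ℕ, (ringp V (j₀ + (n:ℤ)*(3*V+2))).2 = -1 →
      (drot d₁ d₂ n).2 ≠ 1 := by
    intro n hb hδ
    set m := j₀ + (n:ℤ)*(3*V+2) with hm
    have hbmod := ring_snd_mod V hV m
    rw [hb] at hbmod
    have hpar2 : m % 2 = (j₀ + ((n:ℤ) % 2)*(3*V+2)) % 2 := by
      rw [hm]; exact shift_par j₀ ((n:ℤ)) (3*V+2)
    have h4 : n % 4 = 0 ∨ n % 4 = 1 ∨ n % 4 = 2 ∨ n % 4 = 3 := by omega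
    have hd2even : |d₂| = 1 → ℓ' % 2 = 0 := fun h => by
      have := h₂ h; rwa [Int.even_iff] at this
    have hd1even : |d₁| = 1 → k' % 2 = 0 := fun h => by
      have := h₁ h; rwa [Int.even_iff] at this
    rcases h4 with h|h|h|h
    · have hδ' : (drot d₁ d₂ n).2 = d₂ := by simp [drot, h]
      rw [hδ'] at hδ
      have hl2 := hd2even (by rw [hδ]; exact abs_one)
      have hn2 : (n:ℤ) % 2 = 0 := by omega
      rw [hn2] at hpar2
      norm_num at hpar2
      omega
    · have hδ' : (drot d₁ d₂ n).2 = -d₁ := by simp [drot, h]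
      rw [hδ'] at hδ
      have hd : d₁ = -1 := by linarith
      have hk2 := hd1even (by rw [hd]; norm_num)
      have hn2 : (n:ℤ) % 2 = 1 := by omega
      rw [hn2] at hpar2
      norm_num at hpar2
      omega
    · have hδ' : (drot d₁ d₂ n).2 = -d₂ := by simp [drot, h]
      rw [hδ'] at hδ
      have hd : d₂ = -1 := by linarith
      have hl2 := hd2even (by rw [hd]; norm_num)
      have hn2 : (n:ℤ) % 2 = 0 := by omega
      rw [hn2] at hpar2
      norm_num at hpar2
      omega
    · have hδ' : (drot d₁ d₂ n).2 = d₁ := by simp [drot, h]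
      rw [hδ'] at hδ
      have hk2 := hd1even (by rw [hδ]; exact abs_one)
      have hn2 : (n:ℤ) % 2 = 1 := by omega
      rw [hn2] at hpar2
      norm_num at hpar2
      omega
  -- the orbit formula
  have key : ∀ n : ℕ, F^[n] (x, y) =
      ((((ringp V (j₀ + (n:ℤ)*(3*V+2))).1 : ℝ) + (drot d₁ d₂ n).1)/2,
       (((ringp V (j₀ + (n:ℤ)*(3*V+2))).2 : ℝ) + (drot d₁ d₂ n).2)/2) := by
    intro n
    induction n with
    | zero =>
      have h0 : drot d₁ d₂ 0 = (d₁, d₂) := by simp [drot]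
      simp only [Function.iterate_zero_apply, Nat.cast_zero, zero_mul, add_zero, hbase, h0]
      rw [Prod.mk.injEq]
      constructor <;> push_cast <;> linarith
    | succ n ih =>
      rw [Function.iterate_succ_apply', ih]
      have hidx : j₀ + ((n+1:ℕ):ℤ)*(3*V+2) = (j₀ + (n:ℤ)*(3*V+2)) + (3*V+2) := by
        push_cast; ring
      rw [hidx, ring_g V hV (j₀ + (n:ℤ)*(3*V+2)), drot_succ]
      set m := j₀ + (n:ℤ)*(3*V+2) with hm
      have hodd : (ringp V m).2 % 2 = 1 := by
        have := ring_snd_mod V hV m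
        omega
      have hδb := (drot_bound d₁ d₂ hb₁ hb₂ n).2
      have hδb' := abs_le.mp hδb
      have hsign : s ((((ringp V m).2 : ℝ) + (drot d₁ d₂ n).2)/2)
          = (((if 0 ≤ (ringp V m).2 then 2 else -2 : ℤ)):ℝ)/2 := by
        rcases le_or_gt 0 ((ringp V m).2) with hpos | hneg
        · have hge : (1:ℤ) ≤ (ringp V m).2 := by omega
          have hge' : (1:ℝ) ≤ ((ringp V m).2 : ℝ) := by exact_mod_cast hge
          rw [if_pos hpos, s, if_pos (by linarith)]
          norm_num
        · have hle : (ringp V m).2 ≤ -1 := by omega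
          have hlt : (((ringp V m).2 : ℝ) + (drot d₁ d₂ n).2)/2 < 0 := by
            rcases eq_or_lt_of_le hle with heq | hlt2
            · have hδne : (drot d₁ d₂ n).2 ≠ 1 := havoid n heq
              have hδlt : (drot d₁ d₂ n).2 < 1 := lt_of_le_of_ne hδb'.2 hδne
              have hc1 : ((ringp V m).2 : ℝ) = -1 := by exact_mod_cast heq
              rw [hc1]; linarith
            · have : (ringp V m).2 ≤ -2 := by omega
              have h2 : ((ringp V m).2 : ℝ) ≤ -2 := by exact_mod_cast this
              linarith
          rw [if_neg (by omega), s, if_neg (by linarith)]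
          norm_num
      simp only [F]
      rw [Prod.mk.injEq]
      constructor
      · norm_num
      · rw [show ((((ringp V m).2 : ℝ) + (drot d₁ d₂ n).2)/2 : ℝ) =
            ((((ringp V m).2 : ℝ) + (drot d₁ d₂ n).2)/2 : ℝ) from rfl] -- no-op
        show -((((ringp V m).1 : ℝ) + (drot d₁ d₂ n).1)/2)
            + s ((((ringp V m).2 : ℝ) + (drot d₁ d₂ n).2)/2) = _
        rw [hsign]
        push_cast [apply_ite (fun (z:ℤ) => (z:ℝ))]
        split_ifs <;> ring
  -- extraction from a fixed iterate
  have hext : ∀ n : ℕ, F^[n] (x,y) = (x,y) →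
      ((4*V+2) ∣ (n:ℤ)*(3*V+2)) ∧ ((d₁ = 0 ∧ d₂ = 0) ∨ (4:ℤ) ∣ (n:ℤ)) := by
    intro n hfix
    rw [key n, Prod.mk.injEq] at hfix
    obtain ⟨hfx, hfy⟩ := hfix
    set m := j₀ + (n:ℤ)*(3*V+2) with hm
    have hA1 := ring_fst_mod V hV m
    have hA2 := ring_snd_mod V hV m
    have hB1 := ring_fst_mod V hV j₀
    have hB2 := ring_snd_mod V hV j₀
    rw [hbase1] at hB1
    rw [hbase2] at hB2
    have hpar2 : m % 2 = (j₀ + ((n:ℤ) % 2)*(3*V+2)) % 2 := by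
      rw [hm]; exact shift_par j₀ ((n:ℤ)) (3*V+2)
    have conclude : (ringp V m).1 = 2*k'+1 → (ringp V m).2 = 2*ℓ'+1 →
        (4*V+2) ∣ (n:ℤ)*(3*V+2) := by
      intro e1 e2
      have hAw : ringp V m = ringp V j₀ := by
        rw [hbase]; exact Prod.ext_iff.mpr ⟨e1, e2⟩
      have hinj := ring_inj V hV hAw
      have hmod : (4*V+2) ∣ (j₀ - m) := Int.ModEq.dvd hinj
      have hrw : j₀ - m = -((n:ℤ)*(3*V+2)) := by rw [hm]; ring
      rw [hrw] at hmod
      exact (dvd_neg).mp hmod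
    have h4 : n % 4 = 0 ∨ n % 4 = 1 ∨ n % 4 = 2 ∨ n % 4 = 3 := by omega
    rcases h4 with h|h|h|h
    · have hδ1 : (drot d₁ d₂ n).1 = d₁ := by simp [drot, h]
      have hδ2 : (drot d₁ d₂ n).2 = d₂ := by simp [drot, h]
      rw [hδ1] at hfx; rw [hδ2] at hfy
      have e1 : (ringp V m).1 = 2*k'+1 := by
        have : ((ringp V m).1 : ℝ) = ((2*k'+1 : ℤ) : ℝ) := by push_cast; linarith
        exact_mod_cast this
      have e2 : (ringp V m).2 = 2*ℓ'+1 := by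
        have : ((ringp V m).2 : ℝ) = ((2*ℓ'+1 : ℤ) : ℝ) := by push_cast; linarith
        exact_mod_cast this
      exact ⟨conclude e1 e2, Or.inr (by omega)⟩
    · have hδ1 : (drot d₁ d₂ n).1 = d₂ := by simp [drot, h]
      have hδ2 : (drot d₁ d₂ n).2 = -d₁ := by simp [drot, h]
      rw [hδ1] at hfx; rw [hδ2] at hfy
      have hr1 : (((ringp V m).1 - (2*k'+1) : ℤ) : ℝ) = d₁ - d₂ := by push_cast; linarith
      have hr2 : (((ringp V m).2 - (2*ℓ'+1) : ℤ) : ℝ) = d₁ + d₂ := by push_cast; linarith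
      have hd1 : d₁ = 0 := half_int_zero
        (e := ((ringp V m).1 - (2*k'+1)) + ((ringp V m).2 - (2*ℓ'+1)))
        (by push_cast; linarith) hb₁ (by omega)
      have hd2 : d₂ = 0 := half_int_zero
        (e := ((ringp V m).2 - (2*ℓ'+1)) - ((ringp V m).1 - (2*k'+1)))
        (by push_cast; linarith) hb₂ (by omega)
      subst hd1; subst hd2
      norm_num at hr1 hr2
      have e1 : (ringp V m).1 = 2*k'+1 := by
        have hz : ((ringp V m).1 - (2*k'+1) : ℤ) = 0 := by exact_mod_cast hr1
        omega
      have e2 : (ringp V m).2 = 2*ℓ'+1 := by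
        have hz : ((ringp V m).2 - (2*ℓ'+1) : ℤ) = 0 := by exact_mod_cast hr2
        omega
      exact ⟨conclude e1 e2, Or.inl ⟨rfl, rfl⟩⟩
    · have hδ1 : (drot d₁ d₂ n).1 = -d₁ := by simp [drot, h]
      have hδ2 : (drot d₁ d₂ n).2 = -d₂ := by simp [drot, h]
      rw [hδ1] at hfx; rw [hδ2] at hfy
      have hn2 : (n:ℤ) % 2 = 0 := by omega
      rw [hn2] at hpar2
      norm_num at hpar2
      have hr1 : (((ringp V m).1 - (2*k'+1) : ℤ) : ℝ) = 2*d₁ := by push_cast; linarith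
      have hr2 : (((ringp V m).2 - (2*ℓ'+1) : ℤ) : ℝ) = 2*d₂ := by push_cast; linarith
      have hd1 : d₁ = 0 := half_int_zero (e := (ringp V m).1 - (2*k'+1)) hr1 hb₁ (by omega)
      have hd2 : d₂ = 0 := half_int_zero (e := (ringp V m).2 - (2*ℓ'+1)) hr2 hb₂ (by omega)
      subst hd1; subst hd2
      norm_num at hr1 hr2
      have e1 : (ringp V m).1 = 2*k'+1 := by
        have hz : ((ringp V m).1 - (2*k'+1) : ℤ) = 0 := by exact_mod_cast hr1
        omega
      have e2 : (ringp V m).2 = 2*ℓ'+1 := by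
        have hz : ((ringp V m).2 - (2*ℓ'+1) : ℤ) = 0 := by exact_mod_cast hr2
        omega
      exact ⟨conclude e1 e2, Or.inl ⟨rfl, rfl⟩⟩
    · have hδ1 : (drot d₁ d₂ n).1 = -d₂ := by simp [drot, h]
      have hδ2 : (drot d₁ d₂ n).2 = d₁ := by simp [drot, h]
      rw [hδ1] at hfx; rw [hδ2] at hfy
      have hr1 : (((ringp V m).1 - (2*k'+1) : ℤ) : ℝ) = d₁ + d₂ := by push_cast; linarith
      have hr2 : (((ringp V m).2 - (2*ℓ'+1) : ℤ) : ℝ) = d₂ - d₁ := by push_cast; linarith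
      have hd1 : d₁ = 0 := half_int_zero
        (e := ((ringp V m).1 - (2*k'+1)) - ((ringp V m).2 - (2*ℓ'+1)))
        (by push_cast; linarith) hb₁ (by omega)
      have hd2 : d₂ = 0 := half_int_zero
        (e := ((ringp V m).1 - (2*k'+1)) + ((ringp V m).2 - (2*ℓ'+1)))
        (by push_cast; linarith) hb₂ (by omega)
      subst hd1; subst hd2
      norm_num at hr1 hr2
      have e1 : (ringp V m).1 = 2*k'+1 := by
        have hz : ((ringp V m).1 - (2*k'+1) : ℤ) = 0 := by exact_mod_cast hr1
        omega
      have e2 : (ringp V m).2 = 2*ℓ'+1 := by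
        have hz : ((ringp V m).2 - (2*ℓ'+1) : ℤ) = 0 := by exact_mod_cast hr2
        omega
      exact ⟨conclude e1 e2, Or.inl ⟨rfl, rfl⟩⟩
  -- validity of claimed periods
  have hvalid : ∀ n : ℕ, n % 4 = 0 → (4*V+2) ∣ (n:ℤ)*(3*V+2) → F^[n] (x,y) = (x,y) := by
    intro n hn4 hdvd
    obtain ⟨t, ht⟩ := hdvd
    have hidx : j₀ + (n:ℤ)*(3*V+2) = j₀ + (4*V+2)*t := by rw [ht]
    have hδ : drot d₁ d₂ n = (d₁, d₂) := by simp [drot, hn4]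
    rw [key n, hidx, ringp_add_mul, hδ, hbase, Prod.mk.injEq]
    constructor <;> push_cast <;> linarith
  constructor
  · -- non-center case
    intro hnd
    have hpz : (((8*V+4).toNat : ℕ) : ℤ) = 8*V+4 := Int.toNat_of_nonneg (by omega)
    have hp4 : (8*V+4).toNat % 4 = 0 := by omega
    have hpdvd : (4*V+2) ∣ (((8*V+4).toNat : ℕ) : ℤ)*(3*V+2) := ⟨2*(3*V+2), by rw [hpz]; ring⟩
    have hper : Function.IsPeriodicPt F (8*V+4).toNat (x,y) := hvalid _ hp4 hpdvd
    have hppos : 0 < (8*V+4).toNat := by omega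
    have hle := hper.minimalPeriod_le hppos
    have hmpos : 0 < Function.minimalPeriod F (x,y) := hper.minimalPeriod_pos hppos
    have hfix : F^[Function.minimalPeriod F (x,y)] (x,y) = (x,y) :=
      Function.iterate_minimalPeriod
    obtain ⟨hdvd, hor⟩ := hext _ hfix
    have h4 : (4:ℤ) ∣ ((Function.minimalPeriod F (x,y) : ℕ) : ℤ) := by
      rcases hor with h|h
      · exact absurd h hnd
      · exact h
    have hge := div_lemma V _ hV (by exact_mod_cast hmpos) h4 hdvd
    omega
  · -- center case
    rintro ⟨rfl, rfl⟩
    have hδ0 : ∀ n : ℕ, drot 0 0 n = ((0:ℝ), (0:ℝ)) := by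
      intro n; unfold drot; split_ifs <;> norm_num
    have hvalidc : ∀ n : ℕ, (4*V+2) ∣ (n:ℤ)*(3*V+2) → F^[n] (x,y) = (x,y) := by
      intro n hdvd
      obtain ⟨t, ht⟩ := hdvd
      have hidx : j₀ + (n:ℤ)*(3*V+2) = j₀ + (4*V+2)*t := by rw [ht]
      rw [key n, hidx, ringp_add_mul, hδ0 n, hbase, Prod.mk.injEq]
      constructor <;> push_cast <;> linarith
    by_cases hVe : Even V
    · rw [if_pos hVe]
      have hpz : (((2*V+1).toNat : ℕ) : ℤ) = 2*V+1 := Int.toNat_of_nonneg (by omega)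
      have hpdvd : (4*V+2) ∣ (((2*V+1).toNat : ℕ) : ℤ)*(3*V+2) := by
        rw [hpz]; exact even_valid V hVe
      have hper : Function.IsPeriodicPt F (2*V+1).toNat (x,y) := hvalidc _ hpdvd
      have hppos : 0 < (2*V+1).toNat := by omega
      have hle := hper.minimalPeriod_le hppos
      have hmpos : 0 < Function.minimalPeriod F (x,y) := hper.minimalPeriod_pos hppos
      have hfix : F^[Function.minimalPeriod F (x,y)] (x,y) = (x,y) :=
        Function.iterate_minimalPeriod
      obtain ⟨hdvd, -⟩ := hext _ hfix
      have hge := cdiv_even V _ hV (by exact_mod_cast hmpos) hdvd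
      omega
    · rw [if_neg hVe]
      have hpz : (((4*V+2).toNat : ℕ) : ℤ) = 4*V+2 := Int.toNat_of_nonneg (by omega)
      have hpdvd : (4*V+2) ∣ (((4*V+2).toNat : ℕ) : ℤ)*(3*V+2) := by
        rw [hpz]; exact Dvd.intro _ rfl
      have hper : Function.IsPeriodicPt F (4*V+2).toNat (x,y) := hvalidc _ hpdvd
      have hppos : 0 < (4*V+2).toNat := by omega
      have hle := hper.minimalPeriod_le hppos
      have hmpos : 0 < Function.minimalPeriod F (x,y) := hper.minimalPeriod_pos hppos
      have hfix : F^[Function.minimalPeriod F (x,y)] (x,y) = (x,y) :=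
        Function.iterate_minimalPeriod
      obtain ⟨hdvd, -⟩ := hext _ hfix
      have hge := cdiv_odd V _ hV hVe (by exact_mod_cast hmpos) hdvd
      omega

lemma setup (x : ℝ) : ∃ (k' : ℤ) (d₁ : ℝ),
    2*x = 2*(k':ℝ)+1 + d₁ ∧ |d₁| ≤ 1 ∧ (|d₁| = 1 → Even k') ∧
    ((∀ a : ℤ, x ≠ (a:ℝ)) → (k' = ⌊x⌋ ∧ (d₁ = 0 ↔ x - (⌊x⌋:ℝ) = 1/2))) ∧
    ((∃ a : ℤ, x = (a:ℝ)) →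
      (d₁ ≠ 0 ∧ k' = if Even ⌊x⌋ then ⌊x⌋ else ⌊x⌋ - 1)) := by
  by_cases hx : ∃ a : ℤ, x = (a:ℝ)
  · obtain ⟨a, rfl⟩ := hx
    have hfl : ⌊(a:ℝ)⌋ = a := Int.floor_intCast a
    by_cases hpar : Even a
    · refine ⟨a, -1, by ring, by norm_num, fun _ => hpar, ?_, ?_⟩
      · intro h; exact absurd rfl (h a)
      · intro _; exact ⟨by norm_num, by rw [hfl, if_pos hpar]⟩
    · refine ⟨a - 1, 1, by push_cast; ring, by norm_num,
        fun _ => Int.even_sub_one.mpr hpar, ?_, ?_⟩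
      · intro h; exact absurd rfl (h a)
      · intro _; exact ⟨by norm_num, by rw [hfl, if_neg hpar]⟩
  · push_neg at hx
    have h1 : (⌊x⌋:ℝ) < x := lt_of_le_of_ne (Int.floor_le x) (Ne.symm (hx ⌊x⌋))
    have h2 : x < ⌊x⌋ + 1 := Int.lt_floor_add_one x
    refine ⟨⌊x⌋, 2*x - (2*(⌊x⌋:ℝ)+1), by ring, ?_, ?_, ?_, ?_⟩
    · rw [abs_le]; constructor <;> linarith
    · intro h
      have : |2*x - (2*(⌊x⌋:ℝ)+1)| < 1 := abs_lt.mpr ⟨by linarith, by linarith⟩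
      exact absurd h (ne_of_lt this)
    · intro _
      refine ⟨rfl, ?_⟩
      constructor <;> intro h <;> linarith
    · intro h
      obtain ⟨a, ha⟩ := h
      exact absurd ha (hx a)

lemma vc_cast_eq (V : ℤ) (hV : 0 ≤ V) (n : ℕ) (h : n = (8 * V + 4).toNat) :
    (n : ℤ) = 8 * V + 4 := by omega


/-- Algorithmic determination of the minimal period of every point of `ℝ²`
under `F` (the case `α = π/2`), in terms of `k = ⌊x⌋`, `ℓ = ⌊y⌋` and the
values `V_{a,b} = max (|a+b+1| - 1) |a-b|`. -/
theorem period_algorithm_pi_div_two (x y : ℝ) :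
    let k : ℤ := ⌊x⌋
    let ℓ : ℤ := ⌊y⌋
    let mp : ℤ := (Function.minimalPeriod F (x, y) : ℤ)
    0 < Function.minimalPeriod F (x, y) ∧
    -- (a) x ∉ ℤ and y ∉ ℤ
    ((∀ a : ℤ, x ≠ (a : ℝ)) → (∀ b : ℤ, y ≠ (b : ℝ)) →
      ((¬(x - (k : ℝ) = 1/2 ∧ y - (ℓ : ℝ) = 1/2) → mp = 8 * Vc k ℓ + 4) ∧
       (x - (k : ℝ) = 1/2 → y - (ℓ : ℝ) = 1/2 →
         (Even (Vc k ℓ) → mp = 2 * Vc k ℓ + 1) ∧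
         (Odd (Vc k ℓ) → mp = 4 * Vc k ℓ + 2)))) ∧
    -- (b) x ∈ ℤ and y ∉ ℤ
    ((∃ a : ℤ, x = (a : ℝ)) → (∀ b : ℤ, y ≠ (b : ℝ)) →
      ((Even k → mp = 8 * Vc k ℓ + 4) ∧ (Odd k → mp = 8 * Vc (k - 1) ℓ + 4))) ∧
    -- (c) x ∉ ℤ and y ∈ ℤ
    ((∀ a : ℤ, x ≠ (a : ℝ)) → (∃ b : ℤ, y = (b : ℝ)) →
      ((Even ℓ → mp = 8 * Vc k ℓ + 4) ∧ (Odd ℓ → mp = 8 * Vc k (ℓ - 1) + 4))) ∧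
    -- (d) x ∈ ℤ and y ∈ ℤ
    ((∃ a : ℤ, x = (a : ℝ)) → (∃ b : ℤ, y = (b : ℝ)) →
      mp = 8 * Vc (if Even k then k else k - 1) (if Even ℓ then ℓ else ℓ - 1) + 4) := by
  intro k ℓ mp
  have hk : k = ⌊x⌋ := rfl
  have hl : ℓ = ⌊y⌋ := rfl
  obtain ⟨k', d₁, hx1, hb1, he1, hni1, hii1⟩ := setup x
  obtain ⟨ℓ', d₂, hy1, hb2, he2, hni2, hii2⟩ := setup y
  obtain ⟨hA, hB⟩ := master k' ℓ' d₁ d₂ x y hx1 hy1 hb1 hb2 he1 he2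
  have hV0 : 0 ≤ Vc k' ℓ' := vc_nonneg k' ℓ'
  refine ⟨?_, ?_, ?_, ?_, ?_⟩
  · -- positivity
    by_cases hd : d₁ = 0 ∧ d₂ = 0
    · rw [hB hd]; split_ifs <;> omega
    · rw [hA hd]; omega
  · -- case (a)
    intro hxI hyI
    obtain ⟨hk', hiff1⟩ := hni1 hxI
    obtain ⟨hl', hiff2⟩ := hni2 hyI
    constructor
    · intro hnc
      have hnd : ¬(d₁ = 0 ∧ d₂ = 0) := by
        intro ⟨hz1, hz2⟩
        exact hnc ⟨by rw [hk]; exact hiff1.mp hz1, by rw [hl]; exact hiff2.mp hz2⟩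
      have := hA hnd
      show (Function.minimalPeriod F (x,y) : ℤ) = 8 * Vc k ℓ + 4
      rw [hk, hl, ← hk', ← hl']
      omega
    · intro hc1 hc2
      have hd : d₁ = 0 ∧ d₂ = 0 :=
        ⟨hiff1.mpr (by rw [← hk]; exact hc1), hiff2.mpr (by rw [← hl]; exact hc2)⟩
      have := hB hd
      constructor
      · intro hEv
        have hEv' : Even (Vc k' ℓ') := by rwa [hk', hl', ← hk, ← hl]
        rw [if_pos hEv'] at this
        show (Function.minimalPeriod F (x,y) : ℤ) = 2 * Vc k ℓ + 1
        rw [hk, hl, ← hk', ← hl']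
        omega
      · intro hOd
        have hOd' : ¬ Even (Vc k' ℓ') := by
          rw [hk', hl', ← hk, ← hl]; exact Int.not_even_iff_odd.mpr hOd
        rw [if_neg hOd'] at this
        show (Function.minimalPeriod F (x,y) : ℤ) = 4 * Vc k ℓ + 2
        rw [hk, hl, ← hk', ← hl']
        omega
  · -- case (b)
    intro hxE hyI
    obtain ⟨hd1ne, hk'⟩ := hii1 hxE
    obtain ⟨hl', -⟩ := hni2 hyI
    have hnd : ¬(d₁ = 0 ∧ d₂ = 0) := fun h => hd1ne h.1
    have := hA hnd
    constructor
    · intro hkE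
      have hk'2 : k' = k := by rw [hk', hk, if_pos (hk ▸ hkE)]
      show (Function.minimalPeriod F (x,y) : ℤ) = 8 * Vc k ℓ + 4
      rw [hl, ← hk'2, ← hl']
      omega
    · intro hkO
      have hk'2 : k' = k - 1 := by
        rw [hk', hk, if_neg (Int.not_even_iff_odd.mpr (hk ▸ hkO))]
      show (Function.minimalPeriod F (x,y) : ℤ) = 8 * Vc (k-1) ℓ + 4
      rw [hl, ← hk'2, ← hl']
      omega
  · -- case (c)
    intro hxI hyE
    obtain ⟨hk', -⟩ := hni1 hxI
    obtain ⟨hd2ne, hl'⟩ := hii2 hyE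
    have hnd : ¬(d₁ = 0 ∧ d₂ = 0) := fun h => hd2ne h.2
    have := hA hnd
    constructor
    · intro hlE
      have hl'2 : ℓ' = ℓ := by rw [hl', hl, if_pos (hl ▸ hlE)]
      show (Function.minimalPeriod F (x,y) : ℤ) = 8 * Vc k ℓ + 4
      rw [hk, ← hk', ← hl'2]
      omega
    · intro hlO
      have hl'2 : ℓ' = ℓ - 1 := by
        rw [hl', hl, if_neg (Int.not_even_iff_odd.mpr (hl ▸ hlO))]
      show (Function.minimalPeriod F (x,y) : ℤ) = 8 * Vc k (ℓ-1) + 4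
      rw [hk, ← hk', ← hl'2]
      omega
  · -- case (d)
    intro hxE hyE
    obtain ⟨hd1ne, hk'⟩ := hii1 hxE
    obtain ⟨hd2ne, hl'⟩ := hii2 hyE
    have hnd : ¬(d₁ = 0 ∧ d₂ = 0) := fun h => hd1ne h.1
    have := hA hnd
    show (Function.minimalPeriod F (x,y) : ℤ)
        = 8 * Vc (if Even k then k else k - 1) (if Even ℓ then ℓ else ℓ - 1) + 4
    rw [hk, hl, ← hk', ← hl']
    omega
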